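/- arXiv:2501.03846 — 2 statements merged into one kernel-verified Lean document; each statement's English description precedes it below -/
import Mathlib

section
/- Let X be a finite connected undirected graph and let α be a voltage assignment on X with values in a finite abelian group G. Let Z be a connected component of the derived graph X(G,α), and let H ≤ G be the stabilizer of Z under the action of G on the set of connected components of X(G,α) (induced by h·(v,g) = (v,hg)). Then Z is isomorphic to the derived graph of an H-valued voltage assignment on X, and Z/X is a Galois covering whose Galois group is isomorphic to H. -/
/-! # Multigraphs, coverings, voltage assignments

Directed multigraphs (with loops and multiple edges allowed), undirected multigraphs
(encoded à la Serre, as directed graphs with an edge-inversion), morphisms, coverings,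
sheet numbers, deck transformation groups, Galois coverings, voltage assignments and
their derived graphs, connectedness, connected components, directed cycle graphs,
abstract (tectonic) craters and (tectonic) `l`-volcanoes. -/

/-- A directed multigraph. -/
structure Digraph' : Type 1 where
  V : Type
  E : Type
  src : E → V
  tgt : E → V

namespace Digraph'

variable (X : Digraph')

/-- Two vertices are adjacent if some edge goes from the first to the second. -/
def Adj (v w : X.V) : Prop := ∃ e : X.E, X.src e = v ∧ X.tgt e = w

/-- Two vertices lie in the same connected component (of the underlying
undirected graph). -/
def Reach (v w : X.V) : Prop := Relation.EqvGen X.Adj v w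

/-- A graph is connected if any two vertices lie in the same connected component. -/
def Connected : Prop := ∀ v w : X.V, X.Reach v w

/-- The set of vertices of the connected component containing `v`. -/
def ComponentSet (v : X.V) : Set X.V := {w | X.Reach v w}

/-- The number of connected components. -/
noncomputable def NumComponents : ℕ := Nat.card (Quot X.Adj)

/-- The subgraph generated by a set `S` of vertices: its edges are the edges of `X`
having both endpoints in `S`. -/
def induced (S : Set X.V) : Digraph' where
  V := S
  E := {e : X.E // X.src e ∈ S ∧ X.tgt e ∈ S}
  src e := ⟨X.src e.1, e.2.1⟩
  tgt e := ⟨X.tgt e.1, e.2.2⟩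

end Digraph'

/-- A morphism of directed multigraphs. -/
structure DigraphHom (Y X : Digraph') where
  onV : Y.V → X.V
  onE : Y.E → X.E
  map_src : ∀ e, X.src (onE e) = onV (Y.src e)
  map_tgt : ∀ e, X.tgt (onE e) = onV (Y.tgt e)

namespace DigraphHom

/-- The identity morphism. -/
def id (X : Digraph') : DigraphHom X X :=
  ⟨fun v => v, fun e => e, fun _ => rfl, fun _ => rfl⟩

/-- Composition of morphisms of directed multigraphs. -/
def comp {Z Y X : Digraph'} (g : DigraphHom Y X) (f : DigraphHom Z Y) :
    DigraphHom Z X where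
  onV := g.onV ∘ f.onV
  onE := g.onE ∘ f.onE
  map_src e := by simp only [Function.comp_apply, g.map_src, f.map_src]
  map_tgt e := by simp only [Function.comp_apply, g.map_tgt, f.map_tgt]

end DigraphHom

/-- A covering of directed multigraphs: a surjective morphism which is a local
bijection (it restricts to a bijection on the edges emanating from, respectively
arriving at, each given vertex). -/
def IsGraphCovering {Y X : Digraph'} (f : DigraphHom Y X) : Prop :=
  Function.Surjective f.onV ∧
    (∀ v : Y.V, Set.BijOn f.onE {e | Y.src e = v} {e | X.src e = f.onV v}) ∧
    (∀ v : Y.V, Set.BijOn f.onE {e | Y.tgt e = v} {e | X.tgt e = f.onV v})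

/-- A morphism of graphs is `d`-sheeted if every vertex downstairs has exactly `d`
preimages. -/
def IsSheeted {Y X : Digraph'} (f : DigraphHom Y X) (d : ℕ) : Prop :=
  ∀ x : X.V, Nat.card {y : Y.V // f.onV y = x} = d

/-- The group of deck transformations of `f : Y → X`: pairs of permutations of the
vertices and of the edges of `Y` which are compatible with the graph structure and
commute with `f`. -/
def DeckGroup {Y X : Digraph'} (f : DigraphHom Y X) :
    Subgroup (Equiv.Perm Y.V × Equiv.Perm Y.E) where
  carrier := {σ | (∀ e, Y.src (σ.2 e) = σ.1 (Y.src e)) ∧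
    (∀ e, Y.tgt (σ.2 e) = σ.1 (Y.tgt e)) ∧
    (∀ v, f.onV (σ.1 v) = f.onV v) ∧ (∀ e, f.onE (σ.2 e) = f.onE e)}
  one_mem' := ⟨fun _ => rfl, fun _ => rfl, fun _ => rfl, fun _ => rfl⟩
  mul_mem' := by
    rintro σ τ ⟨h1, h2, h3, h4⟩ ⟨g1, g2, g3, g4⟩
    exact ⟨fun e => by simp [Equiv.Perm.mul_apply, h1, g1],
      fun e => by simp [Equiv.Perm.mul_apply, h2, g2],
      fun v => by simp [Equiv.Perm.mul_apply, h3, g3],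
      fun e => by simp [Equiv.Perm.mul_apply, h4, g4]⟩
  inv_mem' := by
    rintro σ ⟨h1, h2, h3, h4⟩
    refine ⟨fun e => ?_, fun e => ?_, fun v => ?_, fun e => ?_⟩
    · have := h1 (σ.2⁻¹ e)
      simp only [← Equiv.Perm.mul_apply, mul_inv_cancel, Equiv.Perm.one_apply] at this
      simp [Prod.fst_inv, Prod.snd_inv, this]
    · have := h2 (σ.2⁻¹ e)
      simp only [← Equiv.Perm.mul_apply, mul_inv_cancel, Equiv.Perm.one_apply] at this
      simp [Prod.fst_inv, Prod.snd_inv, this]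
    · have := h3 (σ.1⁻¹ v)
      simp only [← Equiv.Perm.mul_apply, mul_inv_cancel, Equiv.Perm.one_apply] at this
      simp [Prod.fst_inv, this]
    · have := h4 (σ.2⁻¹ e)
      simp only [← Equiv.Perm.mul_apply, mul_inv_cancel, Equiv.Perm.one_apply] at this
      simp [Prod.snd_inv, this]

/-- A covering is Galois if it is `d`-sheeted where `d` is the number of its deck
transformations. -/
def IsGaloisCov {Y X : Digraph'} (f : DigraphHom Y X) : Prop :=
  IsGraphCovering f ∧ ∃ d : ℕ, IsSheeted f d ∧ Nat.card ↥(DeckGroup f) = d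

/-- An isomorphism of directed multigraphs. -/
structure DigraphIso (Y X : Digraph') where
  onV : Y.V ≃ X.V
  onE : Y.E ≃ X.E
  map_src : ∀ e, X.src (onE e) = onV (Y.src e)
  map_tgt : ∀ e, X.tgt (onE e) = onV (Y.tgt e)

/-- An undirected multigraph, encoded à la Serre: every undirected edge is recorded
as a pair of mutually inverse directed edges. -/
structure SerreGraph : Type 1 extends Digraph' where
  inv : E → E
  inv_inv : ∀ e, inv (inv e) = e
  src_inv : ∀ e, src (inv e) = tgt e
  tgt_inv : ∀ e, tgt (inv e) = src e

namespace SerreGraph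

variable (X : SerreGraph)

/-- The subgraph of an undirected multigraph generated by a set `S` of vertices. -/
def inducedClosed (S : Set X.V) : SerreGraph where
  V := S
  E := {e : X.E // X.src e ∈ S ∧ X.tgt e ∈ S}
  src e := ⟨X.src e.1, e.2.1⟩
  tgt e := ⟨X.tgt e.1, e.2.2⟩
  inv e := ⟨X.inv e.1, by rw [X.src_inv, X.tgt_inv]; exact ⟨e.2.2, e.2.1⟩⟩
  inv_inv e := Subtype.ext (X.inv_inv e.1)
  src_inv e := Subtype.ext (X.src_inv e.1)
  tgt_inv e := Subtype.ext (X.tgt_inv e.1)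

/-- The connected component of a vertex, as an undirected multigraph. -/
def component (v : X.V) : SerreGraph :=
  X.inducedClosed (X.toDigraph'.ComponentSet v)

end SerreGraph

/-- The undirected multigraph underlying a directed multigraph (the image of the
directed graph under the forgetful map). -/
def Digraph'.toSerre (X : Digraph') : SerreGraph where
  V := X.V
  E := X.E × Bool
  src e := if e.2 then X.src e.1 else X.tgt e.1
  tgt e := if e.2 then X.tgt e.1 else X.src e.1
  inv e := (e.1, !e.2)
  inv_inv e := by cases e with
    | mk a b => cases b <;> rfl
  src_inv e := by cases e with
    | mk a b => cases b <;> rfl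
  tgt_inv e := by cases e with
    | mk a b => cases b <;> rfl

/-- A morphism of undirected multigraphs. -/
structure SerreHom (Y X : SerreGraph) where
  onV : Y.V → X.V
  onE : Y.E → X.E
  map_src : ∀ e, X.src (onE e) = onV (Y.src e)
  map_tgt : ∀ e, X.tgt (onE e) = onV (Y.tgt e)
  map_inv : ∀ e, X.inv (onE e) = onE (Y.inv e)

/-- The underlying morphism of directed multigraphs. -/
def SerreHom.toDigraphHom {Y X : SerreGraph} (f : SerreHom Y X) :
    DigraphHom Y.toDigraph' X.toDigraph' :=
  ⟨f.onV, f.onE, f.map_src, f.map_tgt⟩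

/-- An isomorphism of undirected multigraphs. -/
structure SerreIso (Y X : SerreGraph) where
  onV : Y.V ≃ X.V
  onE : Y.E ≃ X.E
  map_src : ∀ e, X.src (onE e) = onV (Y.src e)
  map_tgt : ∀ e, X.tgt (onE e) = onV (Y.tgt e)
  map_inv : ∀ e, X.inv (onE e) = onE (Y.inv e)

/-- The group of deck transformations of a morphism of undirected multigraphs. -/
def SerreDeckGroup {Y X : SerreGraph} (f : SerreHom Y X) :
    Subgroup (Equiv.Perm Y.V × Equiv.Perm Y.E) where
  carrier := {σ | (∀ e, Y.src (σ.2 e) = σ.1 (Y.src e)) ∧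
    (∀ e, Y.tgt (σ.2 e) = σ.1 (Y.tgt e)) ∧
    (∀ e, Y.inv (σ.2 e) = σ.2 (Y.inv e)) ∧
    (∀ v, f.onV (σ.1 v) = f.onV v) ∧ (∀ e, f.onE (σ.2 e) = f.onE e)}
  one_mem' := ⟨fun _ => rfl, fun _ => rfl, fun _ => rfl, fun _ => rfl, fun _ => rfl⟩
  mul_mem' := by
    rintro σ τ ⟨h1, h2, h3, h4, h5⟩ ⟨g1, g2, g3, g4, g5⟩
    exact ⟨fun e => by simp [Equiv.Perm.mul_apply, h1, g1],
      fun e => by simp [Equiv.Perm.mul_apply, h2, g2],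
      fun e => by simp [Equiv.Perm.mul_apply, h3, g3],
      fun v => by simp [Equiv.Perm.mul_apply, h4, g4],
      fun e => by simp [Equiv.Perm.mul_apply, h5, g5]⟩
  inv_mem' := by
    rintro σ ⟨h1, h2, h3, h4, h5⟩
    refine ⟨fun e => ?_, fun e => ?_, fun e => ?_, fun v => ?_, fun e => ?_⟩
    · have := h1 (σ.2⁻¹ e)
      simp only [← Equiv.Perm.mul_apply, mul_inv_cancel, Equiv.Perm.one_apply] at this
      simp [Prod.fst_inv, Prod.snd_inv, this]
    · have := h2 (σ.2⁻¹ e)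
      simp only [← Equiv.Perm.mul_apply, mul_inv_cancel, Equiv.Perm.one_apply] at this
      simp [Prod.fst_inv, Prod.snd_inv, this]
    · have := h3 (σ.2⁻¹ e)
      simp only [← Equiv.Perm.mul_apply, mul_inv_cancel, Equiv.Perm.one_apply] at this
      simp only [Prod.snd_inv]
      rw [this]
      simp
    · have := h4 (σ.1⁻¹ v)
      simp only [← Equiv.Perm.mul_apply, mul_inv_cancel, Equiv.Perm.one_apply] at this
      simp [Prod.fst_inv, this]
    · have := h5 (σ.2⁻¹ e)
      simp only [← Equiv.Perm.mul_apply, mul_inv_cancel, Equiv.Perm.one_apply] at this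
      simp [Prod.snd_inv, this]

/-- A morphism of undirected multigraphs is a Galois covering if it is a covering
which is `d`-sheeted, where `d` is the number of its deck transformations. -/
def IsGaloisSerreCov {Y X : SerreGraph} (f : SerreHom Y X) : Prop :=
  IsGraphCovering f.toDigraphHom ∧
    ∃ d : ℕ, IsSheeted f.toDigraphHom d ∧ Nat.card ↥(SerreDeckGroup f) = d
/-- A voltage assignment on an undirected multigraph, with values in a
(multiplicative) group `G`. -/
structure Voltage (X : SerreGraph) (G : Type) [Group G] where
  fn : X.E → G
  compat : ∀ e, fn (X.inv e) = (fn e)⁻¹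

/-- The derived graph of a (multiplicative) voltage assignment. -/
def SerreGraph.derived (X : SerreGraph) (G : Type) [Group G] (α : Voltage X G) :
    SerreGraph where
  V := X.V × G
  E := X.E × G
  src e := (X.src e.1, e.2)
  tgt e := (X.tgt e.1, e.2 * α.fn e.1)
  inv e := (X.inv e.1, e.2 * α.fn e.1)
  inv_inv e := by
    obtain ⟨a, g⟩ := e
    simp [α.compat, X.inv_inv, mul_assoc]
  src_inv e := by
    obtain ⟨a, g⟩ := e
    simp [X.src_inv]
  tgt_inv e := by
    obtain ⟨a, g⟩ := e
    simp [X.tgt_inv, α.compat, mul_assoc]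

/-- A voltage assignment on an undirected multigraph, with values in an additive
group `G`. -/
structure AddVoltage (X : SerreGraph) (G : Type) [AddGroup G] where
  fn : X.E → G
  compat : ∀ e, fn (X.inv e) = -(fn e)

/-- Post-composition of an additive voltage assignment with a map of additive
groups preserving negation. -/
def AddVoltage.comp {X : SerreGraph} {G H : Type} [AddGroup G] [AddGroup H]
    (α : AddVoltage X G) (f : G → H) (hf : ∀ x, f (-x) = -(f x)) : AddVoltage X H :=
  ⟨fun e => f (α.fn e), fun e => by show f (α.fn (X.inv e)) = -(f (α.fn e)); rw [α.compat, hf]⟩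

/-- The derived graph of an additive voltage assignment. -/
def SerreGraph.derivedAdd (X : SerreGraph) (G : Type) [AddGroup G]
    (α : AddVoltage X G) : SerreGraph where
  V := X.V × G
  E := X.E × G
  src e := (X.src e.1, e.2)
  tgt e := (X.tgt e.1, e.2 + α.fn e.1)
  inv e := (X.inv e.1, e.2 + α.fn e.1)
  inv_inv e := by
    obtain ⟨a, g⟩ := e
    simp [α.compat, X.inv_inv, add_assoc]
  src_inv e := by
    obtain ⟨a, g⟩ := e
    simp [X.src_inv]
  tgt_inv e := by
    obtain ⟨a, g⟩ := e
    simp [X.tgt_inv, α.compat, add_assoc]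

namespace VoltageAux

variable (X : SerreGraph) (G : Type) [CommGroup G] (α : Voltage X G)

@[simp] lemma derived_src (e : (X.derived G α).E) :
    (X.derived G α).src e = (X.src e.1, e.2) := rfl

@[simp] lemma derived_tgt (e : (X.derived G α).E) :
    (X.derived G α).tgt e = (X.tgt e.1, e.2 * α.fn e.1) := rfl

@[simp] lemma derived_inv (e : (X.derived G α).E) :
    (X.derived G α).inv e = (X.inv e.1, e.2 * α.fn e.1) := rfl

theorem reach_smul (h : G) {v w : (X.derived G α).V}
    (hr : (X.derived G α).toDigraph'.Reach v w) :
    (X.derived G α).toDigraph'.Reach (v.1, h * v.2) (w.1, h * w.2) := by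
  induction hr with
  | rel a b hab =>
    obtain ⟨e, he1, he2⟩ := hab
    refine Relation.EqvGen.rel _ _ ⟨(e.1, h * e.2), ?_, ?_⟩
    · rw [← he1]; rfl
    · rw [← he2]
      show (X.tgt e.1, h * e.2 * α.fn e.1) = (X.tgt e.1, h * (e.2 * α.fn e.1))
      rw [mul_assoc]
  | refl a => exact Relation.EqvGen.refl _
  | symm a b _ ih => exact Relation.EqvGen.symm _ _ ih
  | trans a b c _ _ ih1 ih2 => exact Relation.EqvGen.trans _ _ _ ih1 ih2

theorem exists_pair {a b : X.V} (hr : X.toDigraph'.Reach a b) :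
    ∃ g g' : G, (X.derived G α).toDigraph'.Reach (a, g) (b, g') := by
  induction hr with
  | rel a b hab =>
    obtain ⟨e, he1, he2⟩ := hab
    exact ⟨1, 1 * α.fn e, Relation.EqvGen.rel _ _ ⟨(e, 1), by rw [← he1]; rfl,
      by rw [← he2]; rfl⟩⟩
  | refl a => exact ⟨1, 1, Relation.EqvGen.refl _⟩
  | symm a b _ ih =>
    obtain ⟨g, g', hg⟩ := ih
    exact ⟨g', g, Relation.EqvGen.symm _ _ hg⟩
  | trans a b c _ _ ih1 ih2 =>
    obtain ⟨g1, g2, h12⟩ := ih1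
    obtain ⟨g3, g4, h34⟩ := ih2
    refine ⟨g1, g2 * g3⁻¹ * g4, Relation.EqvGen.trans _ _ _ h12 ?_⟩
    have := reach_smul X G α (g2 * g3⁻¹) h34
    simpa [mul_assoc, Digraph'.Reach] using this

theorem exists_lift (hconn : X.toDigraph'.Connected) (z : (X.derived G α).V)
    (v : X.V) : ∃ g : G, (X.derived G α).toDigraph'.Reach z (v, g) := by
  obtain ⟨g, g', hg⟩ := exists_pair X G α (hconn z.1 v)
  have := reach_smul X G α (z.2 * g⁻¹) hg
  refine ⟨z.2 * g⁻¹ * g', ?_⟩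
  simp only [inv_mul_cancel_right] at this
  exact this

end VoltageAux
namespace VoltageAux

variable (X : SerreGraph) (G : Type) [CommGroup G] (α : Voltage X G)
variable (z : (X.derived G α).V) (H : Subgroup G)

section

variable (hH : ∀ h : G, h ∈ H ↔ (X.derived G α).toDigraph'.Reach z (z.1, h * z.2))
variable (φ : X.V → G) (hφ : ∀ v, (X.derived G α).toDigraph'.Reach z (v, φ v))

include hH hφ

theorem mem_iff (v : X.V) (g : G) :
    (X.derived G α).toDigraph'.Reach z (v, g) ↔ g * (φ v)⁻¹ ∈ H := by
  constructor
  · intro hr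
    have h2 := reach_smul X G α (g * (φ v)⁻¹) (hφ v)
    rw [inv_mul_cancel_right] at h2
    exact (hH _).mpr (Relation.EqvGen.trans _ _ _ hr (Relation.EqvGen.symm _ _ h2))
  · intro hmem
    have h1 := (hH _).mp hmem
    have h2 := reach_smul X G α (g * (φ v)⁻¹) (hφ v)
    rw [inv_mul_cancel_right] at h2
    exact Relation.EqvGen.trans _ _ _ h1 h2

theorem smul_mem {h : G} (hh : h ∈ H) {w : (X.derived G α).V}
    (hw : (X.derived G α).toDigraph'.Reach z w) :
    (X.derived G α).toDigraph'.Reach z (w.1, h * w.2) := by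
  rw [mem_iff X G α z H hH φ hφ]
  rw [show w = (w.1, w.2) from rfl, mem_iff X G α z H hH φ hφ] at hw
  rw [mul_assoc]
  exact mul_mem hh hw

theorem beta_mem (e : X.E) : φ (X.src e) * α.fn e * (φ (X.tgt e))⁻¹ ∈ H := by
  rw [← mem_iff X G α z H hH φ hφ]
  exact Relation.EqvGen.trans _ _ _ (hφ (X.src e))
    (Relation.EqvGen.rel _ _ ⟨(e, φ (X.src e)), rfl, rfl⟩)

/-- The `H`-valued voltage assignment. -/
def beta : Voltage X ↥H where
  fn e := ⟨φ (X.src e) * α.fn e * (φ (X.tgt e))⁻¹, beta_mem X G α z H hH φ hφ e⟩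
  compat e := by
    apply Subtype.ext
    show φ (X.src (X.inv e)) * α.fn (X.inv e) * (φ (X.tgt (X.inv e)))⁻¹ = _
    rw [X.src_inv, X.tgt_inv, α.compat]
    simp [mul_inv_rev, mul_comm, mul_left_comm, mul_assoc]

/-- The isomorphism between the component and the derived graph of `beta`. -/
noncomputable def compIso :
    SerreIso ((X.derived G α).component z) (X.derived ↥H (beta X G α z H hH φ hφ)) where
  onV := {
    toFun := fun w => (w.1.1, ⟨w.1.2 * (φ w.1.1)⁻¹,
      (mem_iff X G α z H hH φ hφ _ _).mp w.2⟩)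
    invFun := fun p => ⟨(p.1, p.2.1 * φ p.1),
      (mem_iff X G α z H hH φ hφ _ _).mpr (by simpa using p.2.2)⟩
    left_inv := fun w => by
      apply Subtype.ext
      show (w.1.1, w.1.2 * (φ w.1.1)⁻¹ * φ w.1.1) = w.1
      rw [inv_mul_cancel_right]
      exact rfl
    right_inv := fun p => by
      refine Prod.ext rfl (Subtype.ext ?_)
      show p.2.1 * φ p.1 * (φ p.1)⁻¹ = p.2.1
      rw [mul_inv_cancel_right] }
  onE := {
    toFun := fun e => (e.1.1, ⟨e.1.2 * (φ (X.src e.1.1))⁻¹,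
      (mem_iff X G α z H hH φ hφ _ _).mp e.2.1⟩)
    invFun := fun p => ⟨(p.1, p.2.1 * φ (X.src p.1)),
      (mem_iff X G α z H hH φ hφ _ _).mpr (by simpa using p.2.2),
      Relation.EqvGen.trans _ _ _
        ((mem_iff X G α z H hH φ hφ _ _).mpr (by simpa using p.2.2))
        (Relation.EqvGen.rel _ _ ⟨(p.1, p.2.1 * φ (X.src p.1)), rfl, rfl⟩)⟩
    left_inv := fun e => by
      apply Subtype.ext
      show (e.1.1, e.1.2 * (φ (X.src e.1.1))⁻¹ * φ (X.src e.1.1)) = e.1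
      rw [inv_mul_cancel_right]
      exact rfl
    right_inv := fun p => by
      refine Prod.ext rfl (Subtype.ext ?_)
      show p.2.1 * φ (X.src p.1) * (φ (X.src p.1))⁻¹ = p.2.1
      rw [mul_inv_cancel_right] }
  map_src e := rfl
  map_tgt e := by
    refine Prod.ext rfl (Subtype.ext ?_)
    show e.1.2 * (φ (X.src e.1.1))⁻¹ * (φ (X.src e.1.1) * α.fn e.1.1 * (φ (X.tgt e.1.1))⁻¹)
      = e.1.2 * α.fn e.1.1 * (φ (X.tgt e.1.1))⁻¹
    simp [mul_assoc]
  map_inv e := by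
    refine Prod.ext ?_ ?_
    · rfl
    · apply Subtype.ext
      show e.1.2 * (φ (X.src e.1.1))⁻¹ * (φ (X.src e.1.1) * α.fn e.1.1 * (φ (X.tgt e.1.1))⁻¹)
        = e.1.2 * α.fn e.1.1 * (φ (X.src (X.inv e.1.1)))⁻¹
      rw [X.src_inv]
      simp [mul_assoc]

end

end VoltageAux
namespace VoltageAux

variable (X : SerreGraph) (G : Type) [CommGroup G] (α : Voltage X G)
variable (z : (X.derived G α).V) (H : Subgroup G)

/-- The projection from the component to the base graph. -/
def projHom : SerreHom ((X.derived G α).component z) X where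
  onV w := w.1.1
  onE e := e.1.1
  map_src e := rfl
  map_tgt e := rfl
  map_inv e := rfl

theorem deck_formula (σp : Equiv.Perm ((X.derived G α).component z).V ×
      Equiv.Perm ((X.derived G α).component z).E)
    (hσ : σp ∈ SerreDeckGroup (projHom X G α z)) (h : G)
    (hz : (σp.1 ⟨z, Relation.EqvGen.refl z⟩).1 = (z.1, h * z.2)) :
    ∀ w : ((X.derived G α).component z).V, (σp.1 w).1 = (w.1.1, h * w.1.2) := by
  obtain ⟨h1, h2, h3, h4, h5⟩ := hσ
  have step : ∀ a b : (X.derived G α).V, (X.derived G α).toDigraph'.Adj a b →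
      (∀ ha : (X.derived G α).toDigraph'.Reach z a,
        (σp.1 ⟨a, ha⟩).1 = (a.1, h * a.2)) →
      (∀ hb : (X.derived G α).toDigraph'.Reach z b,
        (σp.1 ⟨b, hb⟩).1 = (b.1, h * b.2)) := by
    rintro a b ⟨e, he1, he2⟩ qa hb
    subst he1; subst he2
    have ha : (X.derived G α).toDigraph'.Reach z ((X.derived G α).src e) :=
      Relation.EqvGen.trans _ _ _ hb
        (Relation.EqvGen.symm _ _ (Relation.EqvGen.rel _ _ ⟨e, rfl, rfl⟩))
    have e1 : (σp.2 ⟨e, ha, hb⟩).1.1 = e.1 := h5 ⟨e, ha, hb⟩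
    have e2 : (X.derived G α).src (σp.2 ⟨e, ha, hb⟩).1 =
        (((X.derived G α).src e).1, h * ((X.derived G α).src e).2) :=
      (congrArg Subtype.val (h1 ⟨e, ha, hb⟩)).trans (qa ha)
    have g2 : (σp.2 ⟨e, ha, hb⟩).1.2 = h * e.2 := congrArg Prod.snd e2
    have e3 : (σp.1 ⟨(X.derived G α).tgt e, hb⟩).1 =
        (X.derived G α).tgt (σp.2 ⟨e, ha, hb⟩).1 :=
      (congrArg Subtype.val (h2 ⟨e, ha, hb⟩)).symm
    rw [e3]
    show (X.tgt (σp.2 ⟨e, ha, hb⟩).1.1,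
        (σp.2 ⟨e, ha, hb⟩).1.2 * α.fn (σp.2 ⟨e, ha, hb⟩).1.1)
      = (X.tgt e.1, h * (e.2 * α.fn e.1))
    rw [e1, g2, mul_assoc]
  have key : ∀ a b : (X.derived G α).V, (X.derived G α).toDigraph'.Reach a b →
      ((∀ ha : (X.derived G α).toDigraph'.Reach z a,
        (σp.1 ⟨a, ha⟩).1 = (a.1, h * a.2)) ↔
      (∀ hb : (X.derived G α).toDigraph'.Reach z b,
        (σp.1 ⟨b, hb⟩).1 = (b.1, h * b.2))) := by
    intro a b hr
    induction hr with
    | rel a b hab =>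
      refine ⟨step a b hab, step b a ?_⟩
      obtain ⟨e, he1, he2⟩ := hab
      exact ⟨(X.derived G α).inv e, by rw [(X.derived G α).src_inv, he2],
        by rw [(X.derived G α).tgt_inv, he1]⟩
    | refl a => exact Iff.rfl
    | symm a b _ ih => exact ih.symm
    | trans a b c _ _ ih1 ih2 => exact ih1.trans ih2
  intro w
  exact (key z w.1 w.2).mp (fun _ => hz) w.2

section

variable (hH : ∀ h : G, h ∈ H ↔ (X.derived G α).toDigraph'.Reach z (z.1, h * z.2))
variable (φ : X.V → G) (hφ : ∀ v, (X.derived G α).toDigraph'.Reach z (v, φ v))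

include hH hφ

theorem proj_covering : IsGraphCovering (projHom X G α z).toDigraphHom := by
  refine ⟨fun v => ⟨⟨(v, φ v), hφ v⟩, rfl⟩, fun w => ⟨?_, ?_, ?_⟩, fun w => ⟨?_, ?_, ?_⟩⟩
  · intro e he
    exact congrArg (fun x => x.1.1) he
  · intro e he e' he' hee
    apply Subtype.ext
    refine Prod.ext hee ?_
    have k1 : e.1.2 = w.1.2 := congrArg (fun x => x.1.2) he
    have k2 : e'.1.2 = w.1.2 := congrArg (fun x => x.1.2) he'
    exact k1.trans k2.symm
  · intro e he
    have he' : X.src e = w.1.1 := he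
    have hsrc : (X.derived G α).toDigraph'.Reach z (X.src e, w.1.2) := by
      rw [he']; exact w.2
    refine ⟨⟨(e, w.1.2), hsrc, Relation.EqvGen.trans _ _ _ hsrc
      (Relation.EqvGen.rel _ _ ⟨(e, w.1.2), rfl, rfl⟩)⟩, ?_, rfl⟩
    show ((X.derived G α).component z).src _ = w
    apply Subtype.ext
    show (X.src e, w.1.2) = w.1
    rw [he']
    exact rfl
  · intro e he
    exact congrArg (fun x => x.1.1) he
  · intro e he e' he' hee
    apply Subtype.ext
    refine Prod.ext hee ?_
    have hee' : e.1.1 = e'.1.1 := hee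
    have k1 : e.1.2 * α.fn e.1.1 = w.1.2 := congrArg (fun x => x.1.2) he
    have k2 : e'.1.2 * α.fn e'.1.1 = w.1.2 := congrArg (fun x => x.1.2) he'
    rw [← hee'] at k2
    exact mul_right_cancel (k1.trans k2.symm)
  · intro e he
    have he' : X.tgt e = w.1.1 := he
    have h0 : ((X.derived G α).tgt (e, w.1.2 * (α.fn e)⁻¹) : (X.derived G α).V) = w.1 := by
      show (X.tgt e, w.1.2 * (α.fn e)⁻¹ * α.fn e) = w.1
      rw [inv_mul_cancel_right, he']
      exact rfl
    have htgt : (X.derived G α).toDigraph'.Reach z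
        ((X.derived G α).tgt (e, w.1.2 * (α.fn e)⁻¹)) := by
      rw [h0]; exact w.2
    have hsrc : (X.derived G α).toDigraph'.Reach z (X.src e, w.1.2 * (α.fn e)⁻¹) :=
      Relation.EqvGen.trans _ _ _ w.2 (Relation.EqvGen.symm _ _
        (Relation.EqvGen.rel _ _ ⟨(e, w.1.2 * (α.fn e)⁻¹), rfl, h0⟩))
    refine ⟨⟨(e, w.1.2 * (α.fn e)⁻¹), hsrc, htgt⟩, ?_, rfl⟩
    show ((X.derived G α).component z).tgt _ = w
    exact Subtype.ext h0

theorem proj_sheeted : IsSheeted (projHom X G α z).toDigraphHom (Nat.card ↥H) := by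
  intro x
  refine Nat.card_congr {
    toFun := fun y => ⟨y.1.1.2 * (φ x)⁻¹,
      (mem_iff X G α z H hH φ hφ _ _).mp (by
        have h0 : ((x, y.1.1.2) : (X.derived G α).V) = y.1.1 := Prod.ext y.2.symm rfl
        rw [h0]; exact y.1.2)⟩
    invFun := fun k => ⟨⟨(x, k.1 * φ x),
      (mem_iff X G α z H hH φ hφ _ _).mpr (by simpa using k.2)⟩, rfl⟩
    left_inv := fun y => by
      apply Subtype.ext; apply Subtype.ext
      show (x, y.1.1.2 * (φ x)⁻¹ * φ x) = y.1.1
      rw [inv_mul_cancel_right]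
      exact Prod.ext y.2.symm rfl
    right_inv := fun k => by
      apply Subtype.ext
      show k.1 * φ x * (φ x)⁻¹ = k.1
      rw [mul_inv_cancel_right] }

/-- The deck transformation associated to `h ∈ H`. -/
def deckOf (h : G) (hh : h ∈ H) :
    Equiv.Perm ((X.derived G α).component z).V ×
      Equiv.Perm ((X.derived G α).component z).E :=
  ({ toFun := fun w => ⟨(w.1.1, h * w.1.2), smul_mem X G α z H hH φ hφ hh w.2⟩
     invFun := fun w => ⟨(w.1.1, h⁻¹ * w.1.2),
       smul_mem X G α z H hH φ hφ (inv_mem hh) w.2⟩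
     left_inv := fun w => by
       apply Subtype.ext
       show (w.1.1, h⁻¹ * (h * w.1.2)) = w.1
       rw [inv_mul_cancel_left]
       exact rfl
     right_inv := fun w => by
       apply Subtype.ext
       show (w.1.1, h * (h⁻¹ * w.1.2)) = w.1
       rw [mul_inv_cancel_left]
       exact rfl },
   { toFun := fun e => ⟨(e.1.1, h * e.1.2), smul_mem X G α z H hH φ hφ hh e.2.1, by
       show (X.derived G α).toDigraph'.Reach z (X.tgt e.1.1, h * e.1.2 * α.fn e.1.1)
       rw [mul_assoc]
       exact smul_mem X G α z H hH φ hφ hh e.2.2⟩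
     invFun := fun e => ⟨(e.1.1, h⁻¹ * e.1.2),
       smul_mem X G α z H hH φ hφ (inv_mem hh) e.2.1, by
       show (X.derived G α).toDigraph'.Reach z (X.tgt e.1.1, h⁻¹ * e.1.2 * α.fn e.1.1)
       rw [mul_assoc]
       exact smul_mem X G α z H hH φ hφ (inv_mem hh) e.2.2⟩
     left_inv := fun e => by
       apply Subtype.ext
       show (e.1.1, h⁻¹ * (h * e.1.2)) = e.1
       rw [inv_mul_cancel_left]
       exact rfl
     right_inv := fun e => by
       apply Subtype.ext
       show (e.1.1, h * (h⁻¹ * e.1.2)) = e.1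
       rw [mul_inv_cancel_left]
       exact rfl })

theorem deckOf_mem (h : G) (hh : h ∈ H) :
    deckOf X G α z H hH φ hφ h hh ∈ SerreDeckGroup (projHom X G α z) := by
  refine ⟨fun e => rfl, fun e => ?_, fun e => ?_, fun v => rfl, fun e => rfl⟩
  · exact Subtype.ext (Prod.ext rfl (mul_assoc _ _ _))
  · exact Subtype.ext (Prod.ext rfl (mul_assoc _ _ _))

/-- The homomorphism from `H` to the deck group. -/
def deckHom : ↥H →* ↥(SerreDeckGroup (projHom X G α z)) where
  toFun k := ⟨deckOf X G α z H hH φ hφ k.1 k.2, deckOf_mem X G α z H hH φ hφ k.1 k.2⟩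
  map_one' := by
    apply Subtype.ext
    refine Prod.ext ?_ ?_
    · apply Equiv.ext; intro w
      apply Subtype.ext
      show (w.1.1, (1 : G) * w.1.2) = w.1
      rw [one_mul]
      exact rfl
    · apply Equiv.ext; intro e
      apply Subtype.ext
      show (e.1.1, (1 : G) * e.1.2) = e.1
      rw [one_mul]
      exact rfl
  map_mul' k k' := by
    apply Subtype.ext
    refine Prod.ext ?_ ?_
    · apply Equiv.ext; intro w
      apply Subtype.ext
      show (w.1.1, (k.1 * k'.1) * w.1.2) = (w.1.1, k.1 * (k'.1 * w.1.2))
      rw [mul_assoc]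
    · apply Equiv.ext; intro e
      apply Subtype.ext
      show (e.1.1, (k.1 * k'.1) * e.1.2) = (e.1.1, k.1 * (k'.1 * e.1.2))
      rw [mul_assoc]

theorem deckHom_bijective : Function.Bijective (deckHom X G α z H hH φ hφ) := by
  constructor
  · intro k k' heq
    have hkk : k.1 * z.2 = k'.1 * z.2 :=
      congrArg (fun σ : ↥(SerreDeckGroup (projHom X G α z)) =>
        (σ.1.1 ⟨z, Relation.EqvGen.refl z⟩).1.2) heq
    exact Subtype.ext (mul_right_cancel hkk)
  · intro σ
    obtain ⟨h1, h2, h3, h4, h5⟩ := σ.2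
    set t := σ.1.1 ⟨z, Relation.EqvGen.refl z⟩ with ht
    set h : G := t.1.2 * z.2⁻¹ with hdef
    have hfix : t.1.1 = z.1 := h4 ⟨z, Relation.EqvGen.refl z⟩
    have hz' : t.1 = (z.1, h * z.2) := by
      refine Prod.ext hfix ?_
      rw [hdef, inv_mul_cancel_right]
    have hmem : h ∈ H := (hH h).mpr (by rw [← hz']; exact t.2)
    have vf := deck_formula X G α z σ.1 σ.2 h hz'
    have ef : ∀ ee : ((X.derived G α).component z).E,
        (σ.1.2 ee).1 = (ee.1.1, h * ee.1.2) := by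
      intro ee
      have e1 : (σ.1.2 ee).1.1 = ee.1.1 := h5 ee
      have e2 : (X.derived G α).src (σ.1.2 ee).1 =
          ((((X.derived G α).component z).src ee).1.1,
            h * (((X.derived G α).component z).src ee).1.2) :=
        (congrArg Subtype.val (h1 ee)).trans
          (vf (((X.derived G α).component z).src ee))
      have g2 : (σ.1.2 ee).1.2 = h * ee.1.2 := congrArg Prod.snd e2
      exact Prod.ext e1 g2
    refine ⟨⟨h, hmem⟩, ?_⟩
    apply Subtype.ext
    refine Prod.ext ?_ ?_
    · apply Equiv.ext; intro w
      exact Subtype.ext (vf w).symm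
    · apply Equiv.ext; intro ee
      exact Subtype.ext (ef ee).symm

/-- The deck group of the projection is isomorphic to `H`. -/
noncomputable def deckEquiv : ↥(SerreDeckGroup (projHom X G α z)) ≃* ↥H :=
  (MulEquiv.ofBijective (deckHom X G α z H hH φ hφ)
    (deckHom_bijective X G α z H hH φ hφ)).symm

end

end VoltageAux
/-- **Lemma (connected components of derived graphs of abelian voltage assignments).**
Let `X` be a finite connected undirected graph and let `α` be a voltage assignment on
`X` with values in a finite abelian group `G`.  Let `Z` be a connected component of
the derived graph `X(G, α)` (the component of a vertex `z`), and let `H ≤ G` be the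
stabilizer of `Z` under the action of `G` on the set of connected components of
`X(G, α)` (induced by `h • (v, g) = (v, h * g)`).  Then `Z` is isomorphic to the
derived graph of an `H`-valued voltage assignment on `X`, and `Z/X` is a Galois
covering whose Galois group is isomorphic to `H`. -/
theorem component_of_derived_graph_isGalois
    (X : SerreGraph) (hV : Finite X.V) (hE : Finite X.E)
    (hconn : X.toDigraph'.Connected)
    (G : Type) [CommGroup G] [Finite G] (α : Voltage X G)
    (z : (X.derived G α).V)
    (H : Subgroup G)
    (hH : ∀ h : G, h ∈ H ↔
      (X.derived G α).toDigraph'.Reach z (z.1, h * z.2)) :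
    (∃ β : Voltage X ↥H,
      Nonempty (SerreIso ((X.derived G α).component z) (X.derived ↥H β))) ∧
    ∃ f : SerreHom ((X.derived G α).component z) X,
      (∀ w, f.onV w = (w.1).1) ∧ (∀ e, f.onE e = (e.1).1) ∧
      IsGraphCovering f.toDigraphHom ∧
      IsGaloisSerreCov f ∧
      Nonempty (↥(SerreDeckGroup f) ≃* H) := by
  classical
  choose φ hφ using VoltageAux.exists_lift X G α hconn z
  refine ⟨⟨VoltageAux.beta X G α z H hH φ hφ,
      ⟨VoltageAux.compIso X G α z H hH φ hφ⟩⟩,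
    VoltageAux.projHom X G α z, fun w => rfl, fun e => rfl,
    VoltageAux.proj_covering X G α z H hH φ hφ,
    ⟨VoltageAux.proj_covering X G α z H hH φ hφ, Nat.card ↥H,
      VoltageAux.proj_sheeted X G α z H hH φ hφ,
      Nat.card_congr (VoltageAux.deckEquiv X G α z H hH φ hφ).toEquiv⟩,
    ⟨VoltageAux.deckEquiv X G α z H hH φ hφ⟩⟩
end

section
/- Let p be a prime with p ≡ 3 (mod 4). Then there exist infinitely many primes l such that l ≥ 5, l ≠ p, −l is not a quadratic residue modulo p, and l − 1 has a prime factor different from 2 and 3. -/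
/-- **Existence of infinitely many auxiliary primes.**
Let `p` be a prime with `p ≡ 3 (mod 4)`.  Then there exist infinitely many primes `l`
such that `l ≥ 5`, `l ≠ p`, `-l` is not a quadratic residue modulo `p`, and `l - 1`
has a prime factor different from `2` and `3`. -/
theorem infinitely_many_auxiliary_primes (p : ℕ) (hp : p.Prime) (hp4 : p % 4 = 3) :
    {l : ℕ | l.Prime ∧ 5 ≤ l ∧ l ≠ p ∧ ¬ IsSquare (-(l : ZMod p)) ∧
      ∃ q : ℕ, q.Prime ∧ q ≠ 2 ∧ q ≠ 3 ∧ q ∣ (l - 1)}.Infinite := by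
  haveI : Fact p.Prime := ⟨hp⟩
  have hppos : 0 < p := hp.pos
  haveI : NeZero (5 * p) := ⟨by positivity⟩
  have hinf := Nat.infinite_setOfPred_prime_and_eq_mod (q := 5 * p) (a := 1) isUnit_one
  have h2 : ({l : ℕ | l.Prime ∧ (l : ZMod (5 * p)) = 1} \ {l | l < 5}).Infinite :=
    hinf.diff (Set.finite_Iio 5)
  refine h2.mono ?_
  rintro l ⟨⟨hlp, hl1⟩, hl5⟩
  simp only [Set.mem_setOf_eq, not_lt] at hl5
  have hcast5 : (l : ZMod 5) = 1 := by
    have := congrArg (ZMod.castHom (dvd_mul_right 5 p) (ZMod 5)) hl1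
    rwa [map_natCast, map_one] at this
  have hcastp : (l : ZMod p) = 1 := by
    have := congrArg (ZMod.castHom (dvd_mul_left p 5) (ZMod p)) hl1
    rwa [map_natCast, map_one] at this
  refine ⟨hlp, hl5, ?_, ?_, 5, by norm_num, by norm_num, by norm_num, ?_⟩
  · rintro rfl
    rw [ZMod.natCast_self] at hcastp
    exact one_ne_zero hcastp.symm
  · rw [hcastp]
    rw [show ((-1 : ZMod p) = -1) from rfl, ZMod.exists_sq_eq_neg_one_iff]
    simp [hp4]
  · have h : l ≡ 1 [MOD 5] := by
      have : (l : ZMod 5) = ((1 : ℕ) : ZMod 5) := by simpa using hcast5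
      exact (ZMod.natCast_eq_natCast_iff l 1 5).mp this
    exact (Nat.modEq_iff_dvd' (by omega)).mp h.symm
end
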